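/- arXiv:1003.5944 — 3 statements merged into one kernel-verified Lean document; each statement's English description precedes it below -/
import Mathlib

section
/- Let X be a simplicial set and let c be a k-sphere in X (k ≥ 1) with all faces c_0, …, c_k degenerate. Let r be the minimal value of dgn(c_i) over 0 ≤ i ≤ k and let m be the smallest ordinal with dgn(c_m) = r. If an ordinal j reduces c_m, then c_{j+1} = c_m σ_m δ_{j+1}. -/
open CategoryTheory Simplicial

namespace AufhebungSSet

/-- An `n`-simplex `x` of a simplicial set `X` is degenerate if it is the image of a
simplex of strictly smaller dimension under the action of an epimorphism of `Δ`. -/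
def IsDegen (X : SSet) {n : ℕ} (x : X _⦋n⦌) : Prop :=
  ∃ m : ℕ, m < n ∧ ∃ ε : (⦋n⦌ : SimplexCategory) ⟶ ⦋m⦌,
    Function.Surjective ε.toOrderHom ∧ ∃ y : X _⦋m⦌, x = X.map ε.op y

/-- The degeneracy `dgn x = n - k`, where `k` is the least dimension from which `x`
is the image of a simplex under the action of an epimorphism; by the Eilenberg–Zilber
lemma this is the dimension of the nondegenerate simplex of which `x` is a degeneracy. -/
noncomputable def dgn (X : SSet) {n : ℕ} (x : X _⦋n⦌) : ℕ :=
  n - sInf (setOf fun k : ℕ => ∃ ε : (⦋n⦌ : SimplexCategory) ⟶ ⦋k⦌,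
    Function.Surjective ε.toOrderHom ∧ ∃ y : X _⦋k⦌, x = X.map ε.op y)

/-- `i` reduces `x` when `dgn (x δᵢ) = dgn x - 1`. -/
def Reduces (X : SSet) {n : ℕ} (i : Fin (n + 2)) (x : X _⦋n + 1⦌) : Prop :=
  dgn X (X.map (SimplexCategory.δ i).op x) + 1 = dgn X x

/-- `i` properly reduces `x` when `x = x δᵢ σᵢ`. -/
def ProperlyReduces (X : SSet) {n : ℕ} (i : Fin (n + 1)) (x : X _⦋n + 1⦌) : Prop :=
  x = X.map (SimplexCategory.σ i).op (X.map (SimplexCategory.δ i.castSucc).op x)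

/-- A `(K+2)`-sphere: a family `c₀, …, c_{K+2}` of `(K+1)`-simplices satisfying the
cycle equations `cⱼ δᵢ = cᵢ δ_{j-1}` for `i < j` (here reindexed: `c_{j+1} δᵢ = cᵢ δⱼ`
for `i ≤ j`). -/
def IsSphere (X : SSet) {K : ℕ} (c : Fin (K + 3) → X _⦋K + 1⦌) : Prop :=
  ∀ i j : Fin (K + 2), i ≤ j →
    X.map (SimplexCategory.δ i).op (c j.succ) = X.map (SimplexCategory.δ j).op (c i.castSucc)

/-- `y` fills the sphere `c` when `y δᵢ = cᵢ` for all `i`. -/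
def IsFiller (X : SSet) {K : ℕ} (y : X _⦋K + 2⦌) (c : Fin (K + 3) → X _⦋K + 1⦌) : Prop :=
  ∀ i : Fin (K + 3), X.map (SimplexCategory.δ i).op y = c i


/-! ### Auxiliary definitions and lemmas -/

open SimplexCategory

/-- The least dimension from which `x` is the image of a simplex under the action of an
epimorphism. -/
noncomputable def ES (X : SSet) {n : ℕ} (x : X _⦋n⦌) : ℕ :=
  sInf (setOf fun k : ℕ => ∃ ε : (⦋n⦌ : SimplexCategory) ⟶ ⦋k⦌,
    Function.Surjective ε.toOrderHom ∧ ∃ y : X _⦋k⦌, x = X.map ε.op y)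

lemma dgn_eq (X : SSet) {n : ℕ} (x : X _⦋n⦌) : dgn X x = n - ES X x := rfl

variable {X : SSet}

lemma map_comp_apply {a b c' : SimplexCategory} (f : a ⟶ b) (g : b ⟶ c')
    (x : X.obj (Opposite.op c')) :
    X.map f.op (X.map g.op x) = X.map (f ≫ g).op x := by
  rw [op_comp, X.map_comp]; rfl

lemma ES_le {n b : ℕ} {x : X _⦋n⦌} (θ : (⦋n⦌ : SimplexCategory) ⟶ ⦋b⦌)
    (hs : Function.Surjective θ.toOrderHom) (y : X _⦋b⦌) (h : x = X.map θ.op y) :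
    ES X x ≤ b :=
  Nat.sInf_le ⟨θ, hs, y, h⟩

lemma ES_le_self {n : ℕ} (x : X _⦋n⦌) : ES X x ≤ n :=
  ES_le (𝟙 _) (fun t => ⟨t, rfl⟩) x (by simp)

lemma ES_spec {n : ℕ} (x : X _⦋n⦌) :
    ∃ ε : (⦋n⦌ : SimplexCategory) ⟶ ⦋ES X x⦌, Function.Surjective ε.toOrderHom ∧
      ∃ y : X _⦋ES X x⦌, x = X.map ε.op y := by
  have h : (setOf fun k : ℕ => ∃ ε : (⦋n⦌ : SimplexCategory) ⟶ ⦋k⦌,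
      Function.Surjective ε.toOrderHom ∧ ∃ y : X _⦋k⦌, x = X.map ε.op y).Nonempty :=
    ⟨n, 𝟙 _, (fun t => ⟨t, rfl⟩), x, (by simp)⟩
  exact Nat.sInf_mem h

lemma exists_epi_factor (X : SSet) (b : ℕ) :
    ∀ {n : ℕ} (θ : (⦋n⦌ : SimplexCategory) ⟶ ⦋b⦌) (y : X _⦋b⦌),
    ∃ k, k ≤ b ∧ (¬ Function.Surjective θ.toOrderHom → k < b) ∧
      ∃ ε : (⦋n⦌ : SimplexCategory) ⟶ ⦋k⦌, Function.Surjective ε.toOrderHom ∧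
        ∃ z : X _⦋k⦌, X.map θ.op y = X.map ε.op z := by
  induction b with
  | zero =>
    intro n θ y
    have hs : Function.Surjective θ.toOrderHom := fun v => ⟨0, by
      apply Fin.ext
      have h1 := (θ.toOrderHom 0).isLt
      have h2 := v.isLt
      simp only [SimplexCategory.len_mk] at h1 h2
      omega⟩
    exact ⟨0, le_rfl, fun h => absurd hs h, θ, hs, y, rfl⟩
  | succ b ih =>
    intro n θ y
    by_cases hs : Function.Surjective θ.toOrderHom
    · exact ⟨b + 1, le_rfl, fun h => absurd hs h, θ, hs, y, rfl⟩
    · obtain ⟨i, θ', hθ⟩ := SimplexCategory.eq_comp_δ_of_not_surjective θ hs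
      obtain ⟨k, hk, _, ε, hε, z, hz⟩ := ih θ' (X.map (δ i).op y)
      refine ⟨k, hk.trans (Nat.le_succ b), fun _ => Nat.lt_succ_of_le hk, ε, hε, z, ?_⟩
      rw [hθ, ← hz, map_comp_apply]

lemma ES_map_le {n b : ℕ} (θ : (⦋n⦌ : SimplexCategory) ⟶ ⦋b⦌) (y : X _⦋b⦌) :
    ES X (X.map θ.op y) ≤ b := by
  obtain ⟨k, hk, _, ε, hε, z, hz⟩ := exists_epi_factor X b θ y
  exact (ES_le ε hε z hz).trans hk

lemma ES_map_lt {n b : ℕ} (θ : (⦋n⦌ : SimplexCategory) ⟶ ⦋b⦌) (y : X _⦋b⦌)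
    (hs : ¬ Function.Surjective θ.toOrderHom) :
    ES X (X.map θ.op y) < b := by
  obtain ⟨k, _, hk, ε, hε, z, hz⟩ := exists_epi_factor X b θ y
  exact lt_of_le_of_lt (ES_le ε hε z hz) (hk hs)

lemma ES_face_le {n : ℕ} (x : X _⦋n + 1⦌) (i : Fin (n + 2)) :
    ES X (X.map (δ i).op x) ≤ ES X x := by
  obtain ⟨ε, hε, y, hy⟩ := ES_spec x
  have h := ES_map_le (δ i ≫ ε) y
  rwa [← map_comp_apply, ← hy] at h

lemma ds_self {n : ℕ} (i : Fin (n + 1)) (z : X _⦋n⦌) :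
    X.map (δ i.castSucc).op (X.map (σ i).op z) = z := by
  rw [map_comp_apply, δ_comp_σ_self, op_id, X.map_id, types_id_apply]

lemma sigma_delta_comp {n b : ℕ} (ε : (⦋n + 1⦌ : SimplexCategory) ⟶ ⦋b⦌) (q : Fin (n + 1))
    (j : Fin (n + 2)) (hq : (j : ℕ) = (q : ℕ) ∨ (j : ℕ) = (q : ℕ) + 1)
    (he : ε.toOrderHom q.castSucc = ε.toOrderHom q.succ) :
    σ q ≫ δ j ≫ ε = ε := by
  ext t : 3
  simp only [comp_toOrderHom, OrderHom.comp_coe, Function.comp_apply]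
  have key : (δ j).toOrderHom ((σ q).toOrderHom t) = t ∨
      ((δ j).toOrderHom ((σ q).toOrderHom t) = q.castSucc ∧ t = q.succ) ∨
      ((δ j).toOrderHom ((σ q).toOrderHom t) = q.succ ∧ t = q.castSucc) := by
    simp only [δ, σ, mkHom, Fin.succAboveOrderEmb, Fin.succAbove, Fin.predAbove, Fin.predAboveOrderHom, OrderEmbedding.ofStrictMono, OrderEmbedding.coe_ofMapLEIff, Hom.toOrderHom_mk, OrderHom.coe_mk, OrderEmbedding.toOrderHom_coe]
    split_ifs with h1 h2 h3 <;>
      [(simp only [Fin.ext_iff, Fin.lt_def, Fin.coe_castSucc, Fin.val_succ, Fin.coe_pred,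
          Fin.coe_castPred] at h1 h2 hq ⊢);
       (simp only [Fin.ext_iff, Fin.lt_def, Fin.coe_castSucc, Fin.val_succ, Fin.coe_pred,
          Fin.coe_castPred] at h1 h2 hq ⊢);
       (simp only [Fin.ext_iff, Fin.lt_def, Fin.coe_castSucc, Fin.val_succ, Fin.coe_pred,
          Fin.coe_castPred] at h1 h3 hq ⊢);
       (simp only [Fin.ext_iff, Fin.lt_def, Fin.coe_castSucc, Fin.val_succ, Fin.coe_pred,
          Fin.coe_castPred] at h1 h3 hq ⊢)] <;>
      first
      | exact Or.inl trivial
      | omega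
  rcases key with h | ⟨h, h'⟩ | ⟨h, h'⟩
  · rw [h]
  · rw [h, h', he]
  · rw [h, h', he]

lemma reduces_ES {K : ℕ} {x : X _⦋K + 1⦌} {j : Fin (K + 2)} (h : Reduces X j x) :
    ES X (X.map (δ j).op x) = ES X x ∧ ES X x ≤ K := by
  have h1 := ES_face_le x j
  have h2 := ES_le_self (X.map (δ j).op x)
  have h3 := ES_le_self x
  have h' : K - ES X (X.map (δ j).op x) + 1 = K + 1 - ES X x := h
  omega

lemma reduces_exists {K : ℕ} {x : X _⦋K + 1⦌} {j : Fin (K + 2)} (h : Reduces X j x) :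
    ∃ q : Fin (K + 1), ((j : ℕ) = (q : ℕ) ∨ (j : ℕ) = (q : ℕ) + 1) ∧
      x = X.map (σ q).op (X.map (δ j).op x) := by
  obtain ⟨hES, hle⟩ := reduces_ES h
  obtain ⟨ε, hε, y, hy⟩ := ES_spec x
  have hq : ∃ q : Fin (K + 1), ((j : ℕ) = (q : ℕ) ∨ (j : ℕ) = (q : ℕ) + 1) ∧
      ε.toOrderHom q.castSucc = ε.toOrderHom q.succ := by
    by_contra hcon
    push_neg at hcon
    have hns : ¬ Function.Surjective (δ j ≫ ε).toOrderHom := by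
      intro hsurj
      obtain ⟨t, ht⟩ := hsurj (ε.toOrderHom j)
      have hu : (δ j ≫ ε).toOrderHom t = ε.toOrderHom (j.succAbove t) := rfl
      have hne : j.succAbove t ≠ j := Fin.succAbove_ne j t
      have ht' : ε.toOrderHom (j.succAbove t) = ε.toOrderHom j := by rw [← hu, ht]
      have hne' : ((j.succAbove t : Fin (K + 2)) : ℕ) ≠ (j : ℕ) :=
        fun hh => hne (Fin.ext hh)
      rcases Nat.lt_or_ge ((j.succAbove t : Fin (K + 2)) : ℕ) (j : ℕ) with hlt | hge
      · have hj1 : 1 ≤ (j : ℕ) := by omega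
        have hjK : (j : ℕ) - 1 < K + 1 := by have := j.isLt; omega
        set q : Fin (K + 1) := ⟨(j : ℕ) - 1, hjK⟩ with hqdef
        have h1 : ε.toOrderHom q.castSucc ≠ ε.toOrderHom q.succ :=
          hcon q (Or.inr (by simp [hqdef]; omega))
        have hcs : ε.toOrderHom q.castSucc < ε.toOrderHom q.succ :=
          lt_of_le_of_ne (ε.toOrderHom.monotone (Fin.castSucc_le_succ q)) h1
        have hqs : q.succ = j := Fin.ext (by simp [hqdef]; omega)
        have hmon : ε.toOrderHom (j.succAbove t) ≤ ε.toOrderHom q.castSucc :=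
          ε.toOrderHom.monotone (by rw [Fin.le_def]; simp [hqdef]; omega)
        rw [ht'] at hmon
        rw [hqs] at hcs
        exact absurd hmon (not_le.mpr hcs)
      · have hlt' : (j : ℕ) < ((j.succAbove t : Fin (K + 2)) : ℕ) := by omega
        have hjK : (j : ℕ) < K + 1 := by have := (j.succAbove t).isLt; omega
        set q : Fin (K + 1) := ⟨(j : ℕ), hjK⟩ with hqdef
        have h1 : ε.toOrderHom q.castSucc ≠ ε.toOrderHom q.succ :=
          hcon q (Or.inl (by simp [hqdef]))
        have hcs : ε.toOrderHom q.castSucc < ε.toOrderHom q.succ :=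
          lt_of_le_of_ne (ε.toOrderHom.monotone (Fin.castSucc_le_succ q)) h1
        have hqc : q.castSucc = j := Fin.ext (by simp [hqdef])
        have hmon : ε.toOrderHom q.succ ≤ ε.toOrderHom (j.succAbove t) :=
          ε.toOrderHom.monotone (by rw [Fin.le_def]; simp [hqdef]; omega)
        rw [ht'] at hmon
        rw [hqc] at hcs
        exact absurd (hcs.trans_le hmon) (lt_irrefl _)
    have hlt : ES X (X.map (δ j).op x) < ES X x := by
      have h2 := ES_map_lt (δ j ≫ ε) y hns
      rwa [← map_comp_apply, ← hy] at h2
    omega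
  obtain ⟨q, hq1, hq2⟩ := hq
  refine ⟨q, hq1, ?_⟩
  have hcomp : (σ q ≫ δ j ≫ ε) = ε := sigma_delta_comp ε q j hq1 hq2
  calc x = X.map ε.op y := hy
    _ = X.map (σ q ≫ δ j ≫ ε).op y := by rw [hcomp]
    _ = X.map (σ q).op (X.map (δ j).op (X.map ε.op y)) := by
          rw [map_comp_apply, map_comp_apply, Category.assoc]
    _ = X.map (σ q).op (X.map (δ j).op x) := by rw [← hy]

/-- If all faces of a sphere `c` are degenerate, `r` is the minimal degeneracy,
`m` is the first face of degeneracy `r`, and `j` reduces `c_m`, then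
`c_{j+1} = c_m σ_m δ_{j+1}`. -/
theorem techlem_b (X : SSet) (K : ℕ) (c : Fin (K + 3) → X _⦋K + 1⦌) (hc : IsSphere X c)
    (r : ℕ) (hr : ∀ u : Fin (K + 3), r ≤ dgn X (c u))
    (m : Fin (K + 3)) (hm : dgn X (c m) = r)
    (hmmin : ∀ u : Fin (K + 3), dgn X (c u) = r → m ≤ u)
    (hdeg : ∀ u : Fin (K + 3), IsDegen X (c u))
    (j : Fin (K + 2)) (hj : Reduces X j (c m)) :
    ∃ h : (m : ℕ) < K + 2,
      c j.succ = X.map (SimplexCategory.δ j.succ).op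
        (X.map (SimplexCategory.σ ⟨(m : ℕ), h⟩).op (c m)) := by
  obtain ⟨hjES, hEK⟩ := reduces_ES hj
  have hm' : K + 1 - ES X (c m) = r := hm
  have hle_all : ∀ u : Fin (K + 3), ES X (c u) ≤ ES X (c m) := by
    intro u
    have h1 : r ≤ K + 1 - ES X (c u) := hr u
    have h3 := ES_le_self (c u)
    omega
  have hkey : ∀ (u : Fin (K + 3)) (i : Fin (K + 2)),
      ES X (X.map (δ i).op (c u)) = ES X (c m) → (m : ℕ) ≤ (u : ℕ) := by
    intro u i h
    have h1 := ES_face_le (c u) i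
    have h2 := hle_all u
    have h4 : dgn X (c u) = r := by
      show K + 1 - ES X (c u) = r
      omega
    exact Fin.le_def.mp (hmmin u h4)
  rcases Nat.lt_trichotomy ((j : ℕ) + 1) (m : ℕ) with hcase | hcase | hcase
  · -- j + 1 < m : impossible
    exfalso
    have hm1 : (m : ℕ) - 1 < K + 2 := by have := m.isLt; omega
    set b : Fin (K + 2) := ⟨(m : ℕ) - 1, hm1⟩ with hb
    have hbs : b.succ = m := Fin.ext (by
      rw [Fin.val_succ]; show (m : ℕ) - 1 + 1 = (m : ℕ); omega)
    have hjb : j ≤ b := by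
      rw [Fin.le_def]; show (j : ℕ) ≤ (m : ℕ) - 1; omega
    have hsph := hc j b hjb
    rw [hbs] at hsph
    have h5 : ES X (X.map (δ b).op (c j.castSucc)) = ES X (c m) := by
      rw [← hsph]; exact hjES
    have h6 := hkey _ _ h5
    simp only [Fin.coe_castSucc] at h6
    omega
  · -- j + 1 = m
    by_cases hjK : (j : ℕ) ≤ K
    · have hmK : (m : ℕ) < K + 2 := by omega
      refine ⟨hmK, ?_⟩
      have hcast : j.succ = (⟨(m : ℕ), hmK⟩ : Fin (K + 2)).castSucc :=
        Fin.ext (by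
          rw [Fin.val_succ, Fin.coe_castSucc]; show (j : ℕ) + 1 = (m : ℕ); omega)
      have hjsm : j.succ = m := Fin.ext (by rw [Fin.val_succ]; omega)
      rw [map_comp_apply, δ_comp_σ_self' hcast, op_id, X.map_id, types_id_apply, hjsm]
    · -- j = K + 1, so m = K + 2 : impossible
      exfalso
      obtain ⟨q, hq1, hq2⟩ := reduces_exists hj
      have hq1' : (j : ℕ) = (q : ℕ) + 1 := by
        rcases hq1 with h | h
        · exfalso; have := q.isLt; omega
        · exact h
      have hface : X.map (δ q.castSucc).op (c m) = X.map (δ j).op (c m) := by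
        conv_lhs => rw [hq2]
        rw [ds_self]
      have hqj : q.castSucc ≤ j := by
        rw [Fin.le_def]; simp only [Fin.coe_castSucc]; omega
      have hsph := hc q.castSucc j hqj
      have hjs : j.succ = m := Fin.ext (by rw [Fin.val_succ]; omega)
      rw [hjs] at hsph
      have h5 : ES X (X.map (δ j).op (c q.castSucc.castSucc)) = ES X (c m) := by
        rw [← hsph, hface]; exact hjES
      have h6 := hkey _ _ h5
      simp only [Fin.coe_castSucc] at h6
      omega
  · -- m ≤ j
    have hmj' : (m : ℕ) ≤ (j : ℕ) := by omega
    have hmK : (m : ℕ) < K + 2 := by have := j.isLt; omega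
    refine ⟨hmK, ?_⟩
    set m'' : Fin (K + 2) := ⟨(m : ℕ), hmK⟩ with hm''
    have hmcs : m''.castSucc = m := Fin.ext (by rw [Fin.coe_castSucc])
    have hmj : m'' ≤ j := by
      rw [Fin.le_def]; show (m : ℕ) ≤ (j : ℕ); omega
    have hsph := hc m'' j hmj
    rw [hmcs] at hsph
    have hES1 : ES X (X.map (δ m'').op (c j.succ)) = ES X (c m) := by
      rw [hsph]; exact hjES
    have hES2 : ES X (c j.succ) = ES X (c m) :=
      le_antisymm (hle_all j.succ) (by rw [← hES1]; exact ES_face_le (c j.succ) m'')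
    have hred : Reduces X m'' (c j.succ) := by
      show dgn X (X.map (δ m'').op (c j.succ)) + 1 = dgn X (c j.succ)
      rw [dgn_eq, dgn_eq, hES1, hES2]
      omega
    obtain ⟨q', hq'1, hq'2⟩ := reduces_exists hred
    have hq'1' : (m : ℕ) = (q' : ℕ) ∨ (m : ℕ) = (q' : ℕ) + 1 := hq'1
    have hq'm : (q' : ℕ) = (m : ℕ) := by
      rcases hq'1' with h | h
      · omega
      · exfalso
        have hface : X.map (δ q'.castSucc).op (c j.succ) = X.map (δ m'').op (c j.succ) := by
          conv_lhs => rw [hq'2]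
          rw [ds_self]
        have hql : q'.castSucc ≤ j := by
          rw [Fin.le_def]; simp only [Fin.coe_castSucc]; omega
        have hsph2 := hc q'.castSucc j hql
        have h5 : ES X (X.map (δ j).op (c q'.castSucc.castSucc)) = ES X (c m) := by
          rw [← hsph2, hface]; exact hES1
        have h6 := hkey _ _ h5
        simp only [Fin.coe_castSucc] at h6
        omega
    by_cases hjm : (j : ℕ) = (m : ℕ)
    · -- j = m
      obtain ⟨q, hq1, hq2⟩ := reduces_exists hj
      have hqm : (q : ℕ) = (m : ℕ) := by
        rcases hq1 with h | h
        · omega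
        · exfalso
          have hface : X.map (δ q.castSucc).op (c m) = X.map (δ j).op (c m) := by
            conv_lhs => rw [hq2]
            rw [ds_self]
          have hsph2 := hc q.castSucc q.castSucc le_rfl
          have hcsucc : q.castSucc.succ = m :=
            Fin.ext (by rw [Fin.val_succ, Fin.coe_castSucc]; omega)
          rw [hcsucc] at hsph2
          have h5 : ES X (X.map (δ q.castSucc).op (c q.castSucc.castSucc)) = ES X (c m) := by
            rw [← hsph2, hface]; exact hjES
          have h6 := hkey _ _ h5
          simp only [Fin.coe_castSucc] at h6
          omega
      have hqq' : q = q' := Fin.ext (by omega)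
      have hm''j : m'' = j := Fin.ext (by show (m : ℕ) = (j : ℕ); omega)
      have hrhs : X.map (δ j.succ).op (X.map (σ (⟨(m : ℕ), hmK⟩ : Fin (K + 2))).op (c m))
          = c m := by
        rw [map_comp_apply, δ_comp_σ_succ' (Fin.ext (by
            rw [Fin.val_succ, Fin.val_succ]; show (j : ℕ) + 1 = (m : ℕ) + 1; omega)),
          op_id, X.map_id, types_id_apply]
      rw [hrhs]
      have hstep : X.map (σ q').op (X.map (δ m'').op (c j.succ))
          = X.map (σ q).op (X.map (δ j).op (c m)) := by
        rw [hsph, hqq']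
      conv_lhs => rw [hq'2, hstep, ← hq2]
    · -- m < j
      have hmlt : (m : ℕ) < (j : ℕ) := by omega
      have hmK1 : (m : ℕ) < K + 1 := by have := j.isLt; omega
      set p : Fin (K + 1) := ⟨(m : ℕ), hmK1⟩ with hp
      have hps : (⟨(m : ℕ), hmK⟩ : Fin (K + 2)) = p.castSucc :=
        Fin.ext (by rw [Fin.coe_castSucc])
      have hgt : p.castSucc < j := by
        rw [Fin.lt_def, Fin.coe_castSucc]; show (m : ℕ) < (j : ℕ); omega
      have hcomp : δ j.succ ≫ σ p.castSucc = σ p ≫ δ j := δ_comp_σ_of_gt hgt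
      have hq'p : q' = p := Fin.ext (by show (q' : ℕ) = (m : ℕ); omega)
      calc c j.succ
          = X.map (σ q').op (X.map (δ m'').op (c j.succ)) := hq'2
        _ = X.map (σ p).op (X.map (δ j).op (c m)) := by rw [hsph, hq'p]
        _ = X.map (δ j.succ).op (X.map (σ p.castSucc).op (c m)) := by
              rw [map_comp_apply, map_comp_apply, hcomp]
        _ = X.map (δ j.succ).op (X.map (σ (⟨(m : ℕ), hmK⟩ : Fin (K + 2))).op (c m)) := by
              rw [hps]

end AufhebungSSet
end

section
/- Let X be a simplicial set and let c be a k-sphere in X (k ≥ 1) with all faces c_0, …, c_k degenerate. Let r be the minimal value of dgn(c_i) over 0 ≤ i ≤ k and let m be the smallest ordinal with dgn(c_m) = r. If m reduces c_m, then m properly reduces c_m and c_m = c_{m+1}. -/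
open CategoryTheory Simplicial

namespace AufhebungSSet

lemma succAbove_val {n} (i : Fin (n+2)) (a : Fin (n+1)) :
    ((i.succAbove a : Fin (n+2)) : ℕ) = if a.val < i.val then a.val else a.val + 1 := by
  rcases Nat.lt_or_ge a.val i.val with h | h
  · rw [if_pos h, Fin.succAbove_of_castSucc_lt _ _ (by simpa [Fin.lt_def] using h)]; rfl
  · rw [if_neg (by omega), Fin.succAbove_of_le_castSucc _ _ (by simpa [Fin.le_def] using h)]; rfl

lemma predAbove_val {n} (p : Fin (n+1)) (b : Fin (n+2)) :
    ((p.predAbove b : Fin (n+1)) : ℕ) = if p.val < b.val then b.val - 1 else b.val := by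
  rcases Nat.lt_or_ge p.val b.val with h | h
  · rw [if_pos h, Fin.predAbove_of_castSucc_lt _ _ (by simpa [Fin.lt_def] using h)]; rfl
  · rw [if_neg (by omega), Fin.predAbove_of_le_castSucc _ _ (by simpa [Fin.le_def] using h)]; rfl

def DSet (X : SSet) {n : ℕ} (x : X _⦋n⦌) : Set ℕ :=
  setOf fun k : ℕ => ∃ ε : (⦋n⦌ : SimplexCategory) ⟶ ⦋k⦌,
    Function.Surjective ε.toOrderHom ∧ ∃ y : X _⦋k⦌, x = X.map ε.op y

lemma dgn_def (X : SSet) {n : ℕ} (x : X _⦋n⦌) : dgn X x = n - sInf (DSet X x) := rfl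

lemma self_mem_DSet (X : SSet) {n : ℕ} (x : X _⦋n⦌) : n ∈ DSet X x := by
  refine ⟨𝟙 _, fun b => ⟨b, rfl⟩, x, by simp⟩

lemma DSet_nonempty (X : SSet) {n : ℕ} (x : X _⦋n⦌) : (DSet X x).Nonempty :=
  ⟨n, self_mem_DSet X x⟩

lemma sInf_DSet_le (X : SSet) {n : ℕ} (x : X _⦋n⦌) : sInf (DSet X x) ≤ n :=
  Nat.sInf_le (self_mem_DSet X x)

lemma mem_DSet_of_surj (X : SSet) {n m k : ℕ} (f : (⦋n⦌ : SimplexCategory) ⟶ ⦋m⦌)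
    (hf : Function.Surjective f.toOrderHom) (e : X _⦋m⦌) (hk : k ∈ DSet X e) :
    k ∈ DSet X (X.map f.op e) := by
  obtain ⟨ε, hε, y, rfl⟩ := hk
  refine ⟨f ≫ ε, ?_, y, by rw [← FunctorToTypes.map_comp_apply, ← op_comp]⟩
  rw [SimplexCategory.comp_toOrderHom]
  rw [OrderHom.comp_coe]
  exact Function.Surjective.comp hε hf

lemma predAbove_surjective {n : ℕ} (p : Fin (n+1)) :
    Function.Surjective (Fin.predAbove p) := by
  intro b
  rcases Nat.lt_or_ge p.val b.val with h | h
  · exact ⟨b.succ, Fin.ext (by rw [predAbove_val]; simp; omega)⟩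
  · exact ⟨b.castSucc, Fin.ext (by rw [predAbove_val]; simp; omega)⟩

lemma sigma_surjective {n : ℕ} (p : Fin (n+1)) :
    Function.Surjective (SimplexCategory.σ p).toOrderHom :=
  predAbove_surjective p

lemma succAbove_predAbove_of_ne {k' : ℕ} (v b : Fin (k'+2)) (hbv : b ≠ v)
    (j₀ : Fin (k'+1)) (hj₀ : (j₀ : ℕ) = min v.val k') :
    v.succAbove (j₀.predAbove b) = b := by
  apply Fin.ext
  rw [succAbove_val, predAbove_val]
  have hb := b.isLt
  have hv := v.isLt
  have hne : b.val ≠ v.val := fun h => hbv (Fin.ext h)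
  split_ifs <;> omega

lemma face_mem_of_exists (X : SSet) {n k : ℕ} (x : X _⦋n+1⦌) (i : Fin (n+2))
    (ε : (⦋n+1⦌ : SimplexCategory) ⟶ ⦋k⦌) (hε : Function.Surjective ε.toOrderHom)
    (y : X _⦋k⦌) (hxy : x = X.map ε.op y)
    (hj : ∃ j, j ≠ i ∧ ε.toOrderHom j = ε.toOrderHom i) :
    k ∈ DSet X (X.map (SimplexCategory.δ i).op x) := by
  obtain ⟨j, hji, hjeq⟩ := hj
  have hcomp : ∀ a : Fin (n+1),
      (SimplexCategory.δ i ≫ ε).toOrderHom a = ε.toOrderHom (i.succAbove a) := fun a => rfl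
  refine ⟨SimplexCategory.δ i ≫ ε, ?_, y,
    by rw [hxy, ← FunctorToTypes.map_comp_apply, ← op_comp]⟩
  intro b
  obtain ⟨a, ha⟩ := hε b
  by_cases hai : a = i
  · obtain ⟨c, hc⟩ := Fin.exists_succAbove_eq hji
    exact ⟨c, by rw [hcomp, hc, hjeq, ← hai, ha]⟩
  · obtain ⟨c, hc⟩ := Fin.exists_succAbove_eq hai
    exact ⟨c, by rw [hcomp, hc, ha]⟩

lemma face_mem_of_forall (X : SSet) {n k : ℕ} (x : X _⦋n+1⦌) (i : Fin (n+2))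
    (ε : (⦋n+1⦌ : SimplexCategory) ⟶ ⦋k⦌) (hε : Function.Surjective ε.toOrderHom)
    (y : X _⦋k⦌) (hxy : x = X.map ε.op y)
    (hj : ∀ j, j ≠ i → ε.toOrderHom j ≠ ε.toOrderHom i) :
    ∃ k', k = k' + 1 ∧ k' ∈ DSet X (X.map (SimplexCategory.δ i).op x) := by
  -- there is an ordinal different from i
  have hex : ∃ j : Fin (n+2), j ≠ i := ⟨i.succAbove 0, Fin.succAbove_ne i 0⟩
  obtain ⟨j, hji⟩ := hex
  -- k ≥ 1
  have hk1 : 1 ≤ k := by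
    by_contra hcon
    have hk0 : k = 0 := by omega
    apply hj j hji
    subst hk0
    apply Fin.ext
    have h1 := (ε.toOrderHom j).isLt
    have h2 := (ε.toOrderHom i).isLt
    simp only [SimplexCategory.len_mk] at h1 h2
    omega
  obtain ⟨k', rfl⟩ : ∃ k', k = k' + 1 := ⟨k - 1, by omega⟩
  set v : Fin (k'+2) := ε.toOrderHom i with hv
  set j₀ : Fin (k'+1) := ⟨min v.val k', by omega⟩ with hj₀
  have hj₀v : (j₀ : ℕ) = min v.val k' := rfl
  -- the key pointwise identity
  have hfix : ∀ a : Fin (n+1),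
      v.succAbove (j₀.predAbove (ε.toOrderHom (i.succAbove a))) = ε.toOrderHom (i.succAbove a) :=
    fun a => succAbove_predAbove_of_ne v _ (hj _ (Fin.succAbove_ne i a)) j₀ hj₀v
  -- the factorization
  have hfac : ((SimplexCategory.δ i ≫ ε) ≫ SimplexCategory.σ j₀) ≫ SimplexCategory.δ v
      = SimplexCategory.δ i ≫ ε := by
    apply SimplexCategory.Hom.ext
    apply OrderHom.ext
    funext a
    exact hfix a
  refine ⟨k', rfl, (SimplexCategory.δ i ≫ ε) ≫ SimplexCategory.σ j₀, ?_,
    X.map (SimplexCategory.δ v).op y, ?_⟩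
  · -- surjectivity
    intro b
    have hbne : v.succAbove b ≠ v := Fin.succAbove_ne v b
    obtain ⟨a', ha'⟩ := hε (v.succAbove b)
    have ha'i : a' ≠ i := fun hh => hbne (by rw [← ha', hh])
    obtain ⟨a, ha⟩ := Fin.exists_succAbove_eq ha'i
    refine ⟨a, ?_⟩
    have h1 : ((SimplexCategory.δ i ≫ ε) ≫ SimplexCategory.σ j₀).toOrderHom a
        = j₀.predAbove (ε.toOrderHom (i.succAbove a)) := rfl
    have h2 := hfix a
    rw [ha, ha'] at h2
    rw [h1, ha, ha']
    exact Fin.succAbove_right_injective h2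
  · rw [hxy, ← FunctorToTypes.map_comp_apply, ← op_comp,
      ← FunctorToTypes.map_comp_apply, ← op_comp, hfac]

lemma sInf_face_le (X : SSet) {n : ℕ} (x : X _⦋n+1⦌) (i : Fin (n+2)) :
    sInf (DSet X (X.map (SimplexCategory.δ i).op x)) ≤ sInf (DSet X x) := by
  obtain ⟨ε, hε, y, hxy⟩ := Nat.sInf_mem (DSet_nonempty X x)
  by_cases hj : ∃ j, j ≠ i ∧ ε.toOrderHom j = ε.toOrderHom i
  · exact Nat.sInf_le (face_mem_of_exists X x i ε hε y hxy hj)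
  · push_neg at hj
    obtain ⟨k', hk, hmem⟩ := face_mem_of_forall X x i ε hε y hxy hj
    have := Nat.sInf_le hmem
    omega

lemma dgn_le_face (X : SSet) {n : ℕ} (x : X _⦋n+1⦌) (i : Fin (n+2)) :
    dgn X x ≤ dgn X (X.map (SimplexCategory.δ i).op x) + 1 := by
  have h1 := sInf_face_le X x i
  have h2 := sInf_DSet_le X (X.map (SimplexCategory.δ i).op x)
  rw [dgn_def, dgn_def]
  omega

lemma dgn_of_properlyReduces (X : SSet) {n : ℕ} (x : X _⦋n+1⦌) (p : Fin (n+1))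
    (h : ProperlyReduces X p x) :
    dgn X (X.map (SimplexCategory.δ p.castSucc).op x) + 1 = dgn X x := by
  set e := X.map (SimplexCategory.δ p.castSucc).op x with he
  have h1 : sInf (DSet X e) ≤ sInf (DSet X x) := sInf_face_le X x p.castSucc
  have hx : x = X.map (SimplexCategory.σ p).op e := h
  have h2 : sInf (DSet X x) ≤ sInf (DSet X e) := by
    refine Nat.sInf_le ?_
    rw [hx]
    exact mem_DSet_of_surj X _ (sigma_surjective p) e (Nat.sInf_mem (DSet_nonempty X e))
  have h3 := sInf_DSet_le X e
  rw [dgn_def, dgn_def]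
  omega

lemma ds_fix {n : ℕ} (p : Fin (n+1)) (a : Fin (n+2)) :
    p.castSucc.succAbove (p.predAbove a) = if a = p.castSucc then p.succ else a := by
  apply Fin.ext
  by_cases ha : a = p.castSucc
  · subst ha
    rw [if_pos rfl, succAbove_val, predAbove_val]
    simp only [Fin.coe_castSucc, Fin.val_succ]
    split_ifs <;> omega
  · rw [if_neg ha, succAbove_val, predAbove_val]
    have hne : a.val ≠ p.val := fun hh => ha (Fin.ext (by simpa using hh))
    simp only [Fin.coe_castSucc]
    split_ifs <;> omega

lemma properlyReduces_of_adj (X : SSet) {n k : ℕ} (x : X _⦋n+1⦌)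
    (ε : (⦋n+1⦌ : SimplexCategory) ⟶ ⦋k⦌) (y : X _⦋k⦌) (hxy : x = X.map ε.op y)
    (p : Fin (n+1)) (h : ε.toOrderHom p.castSucc = ε.toOrderHom p.succ) :
    ProperlyReduces X p x := by
  have key : (SimplexCategory.σ p ≫ SimplexCategory.δ p.castSucc) ≫ ε = ε := by
    apply SimplexCategory.Hom.ext
    apply OrderHom.ext
    funext a
    show ε.toOrderHom (p.castSucc.succAbove (p.predAbove a)) = ε.toOrderHom a
    rw [ds_fix]
    by_cases ha : a = p.castSucc
    · rw [if_pos ha, ha, h]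
    · rw [if_neg ha]
  show x = X.map (SimplexCategory.σ p).op (X.map (SimplexCategory.δ p.castSucc).op x)
  rw [hxy, ← FunctorToTypes.map_comp_apply, ← op_comp, ← FunctorToTypes.map_comp_apply,
    ← op_comp, key]

lemma reduces_cases (X : SSet) {n : ℕ} (x : X _⦋n+1⦌) (i : Fin (n+2)) (h : Reduces X i x) :
    ∃ p : Fin (n+1), (p.castSucc = i ∨ p.succ = i) ∧ ProperlyReduces X p x := by
  obtain ⟨ε, hε, y, hxy⟩ := Nat.sInf_mem (DSet_nonempty X x)
  have hxle := sInf_DSet_le X x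
  have hfle := sInf_DSet_le X (X.map (SimplexCategory.δ i).op x)
  have hred : dgn X (X.map (SimplexCategory.δ i).op x) + 1 = dgn X x := h
  rw [dgn_def, dgn_def] at hred
  have hface : sInf (DSet X (X.map (SimplexCategory.δ i).op x)) = sInf (DSet X x) := by omega
  have hjex : ∃ j, j ≠ i ∧ ε.toOrderHom j = ε.toOrderHom i := by
    by_contra hcon
    push_neg at hcon
    obtain ⟨k', hkk, hmem⟩ := face_mem_of_forall X x i ε hε y hxy hcon
    have := Nat.sInf_le hmem
    omega
  obtain ⟨j, hji, hjeq⟩ := hjex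
  have mono := ε.toOrderHom.monotone
  rcases lt_or_gt_of_ne hji with hlt | hgt
  · -- j < i
    have hlt' : j.val < i.val := hlt
    have hi1 : 1 ≤ i.val := by omega
    have hin : i.val - 1 < n + 1 := by have := i.isLt; omega
    have hsp : (⟨i.val - 1, hin⟩ : Fin (n+1)).succ = i := by
      apply Fin.ext
      show i.val - 1 + 1 = i.val
      omega
    refine ⟨⟨i.val - 1, hin⟩, Or.inr hsp, ?_⟩
    apply properlyReduces_of_adj X x ε y hxy
    rw [hsp]
    have h1 : ε.toOrderHom j ≤ ε.toOrderHom (⟨i.val - 1, hin⟩ : Fin (n+1)).castSucc := by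
      apply mono
      rw [Fin.le_def, Fin.coe_castSucc]
      show j.val ≤ i.val - 1
      omega
    have h2 : ε.toOrderHom (⟨i.val - 1, hin⟩ : Fin (n+1)).castSucc ≤ ε.toOrderHom i := by
      apply mono
      rw [Fin.le_def, Fin.coe_castSucc]
      show i.val - 1 ≤ i.val
      omega
    exact le_antisymm h2 (hjeq ▸ h1)
  · -- i < j
    have hgt' : i.val < j.val := hgt
    have hin : i.val < n + 1 := by have := j.isLt; omega
    have hcp : (⟨i.val, hin⟩ : Fin (n+1)).castSucc = i := by
      apply Fin.ext
      show i.val = i.val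
      rfl
    refine ⟨⟨i.val, hin⟩, Or.inl hcp, ?_⟩
    apply properlyReduces_of_adj X x ε y hxy
    rw [hcp]
    have h1 : ε.toOrderHom (⟨i.val, hin⟩ : Fin (n+1)).succ ≤ ε.toOrderHom j := by
      apply mono
      rw [Fin.le_def, Fin.val_succ]
      show i.val + 1 ≤ j.val
      omega
    have h2 : ε.toOrderHom i ≤ ε.toOrderHom (⟨i.val, hin⟩ : Fin (n+1)).succ := by
      apply mono
      rw [Fin.le_def, Fin.val_succ]
      show i.val ≤ i.val + 1
      omega
    exact le_antisymm h2 (hjeq ▸ h1)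

/-- If all faces of a sphere `c` are degenerate, `r` is the minimal degeneracy,
`m` is the first face of degeneracy `r`, and `m` reduces `c_m`, then `m` properly
reduces `c_m` and `c_m = c_{m+1}`. -/
theorem techlem_c (X : SSet) (K : ℕ) (c : Fin (K + 3) → X _⦋K + 1⦌) (hc : IsSphere X c)
    (r : ℕ) (hr : ∀ u : Fin (K + 3), r ≤ dgn X (c u))
    (m : Fin (K + 3)) (hm : dgn X (c m) = r)
    (hmmin : ∀ u : Fin (K + 3), dgn X (c u) = r → m ≤ u)
    (hdeg : ∀ u : Fin (K + 3), IsDegen X (c u))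
    (hmlt : (m : ℕ) < K + 2) (hred : Reduces X ⟨(m : ℕ), hmlt⟩ (c m)) :
    (∃ h : (m : ℕ) < K + 1, ProperlyReduces X ⟨(m : ℕ), h⟩ (c m)) ∧
      c m = c ⟨(m : ℕ) + 1, by omega⟩ := by
  set i : Fin (K + 2) := ⟨(m : ℕ), hmlt⟩ with hidef
  obtain ⟨p, hp, hpr⟩ := reduces_cases X (c m) i hred
  have hcase : p.castSucc = i := by
    rcases hp with h | h
    · exact h
    · exfalso
      have hpv : (p : ℕ) + 1 = (m : ℕ) := by
        have := congrArg Fin.val h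
        simpa [hidef] using this
      have hdm := dgn_of_properlyReduces X (c m) p hpr
      rw [hm] at hdm
      have hq : (p.castSucc : Fin (K + 2)).succ = m := by
        apply Fin.ext
        simp only [Fin.val_succ, Fin.coe_castSucc]
        omega
      have hs := hc p.castSucc p.castSucc le_rfl
      rw [hq] at hs
      rw [hs] at hdm
      have h4 := dgn_le_face X (c ((p.castSucc : Fin (K + 2)).castSucc)) p.castSucc
      have h5 := hr ((p.castSucc : Fin (K + 2)).castSucc)
      have h6 : dgn X (c ((p.castSucc : Fin (K + 2)).castSucc)) = r := by omega
      have h7 := hmmin _ h6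
      rw [Fin.le_def] at h7
      simp only [Fin.coe_castSucc] at h7
      omega
  have hpv : (p : ℕ) = (m : ℕ) := by
    have := congrArg Fin.val hcase
    simpa [hidef] using this
  have hplt : (m : ℕ) < K + 1 := hpv ▸ p.isLt
  have hpm : (⟨(m : ℕ), hplt⟩ : Fin (K + 1)) = p := Fin.ext (by simp [hpv])
  have hpr' : c m = X.map (SimplexCategory.σ p).op (X.map (SimplexCategory.δ i).op (c m)) := by
    rw [← hcase]; exact hpr
  have hic : (i : Fin (K + 2)).castSucc = m := Fin.ext (by simp [hidef])
  have hs := hc i i le_rfl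
  rw [hic] at hs
  have hd : dgn X (X.map (SimplexCategory.δ i).op (c m)) + 1 = r := by
    have h0 := dgn_of_properlyReduces X (c m) p hpr
    rw [hcase, hm] at h0
    exact h0
  have h4 := dgn_le_face X (c (i.succ)) i
  rw [hs] at h4
  have h5 := hr (i.succ)
  have h6 : dgn X (c (i.succ)) = r := by omega
  have hred2 : Reduces X i (c (i.succ)) := by
    show dgn X (X.map (SimplexCategory.δ i).op (c (i.succ))) + 1 = dgn X (c (i.succ))
    rw [hs, hd, h6]
  obtain ⟨q, hq, hqr⟩ := reduces_cases X (c (i.succ)) i hred2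
  have hqc : q.castSucc = i := by
    rcases hq with h | h
    · exact h
    · exfalso
      have hqv : (q : ℕ) + 1 = (m : ℕ) := by
        have := congrArg Fin.val h
        simpa [hidef] using this
      have hdq := dgn_of_properlyReduces X (c (i.succ)) q hqr
      rw [h6] at hdq
      have hle : q.castSucc ≤ i := by
        rw [Fin.le_def]
        simp only [Fin.coe_castSucc]
        show (q : ℕ) ≤ (m : ℕ)
        omega
      have hs2 := hc q.castSucc i hle
      rw [hs2] at hdq
      have h8 := dgn_le_face X (c ((q.castSucc : Fin (K + 2)).castSucc)) i
      have h9 := hr ((q.castSucc : Fin (K + 2)).castSucc)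
      have h10 : dgn X (c ((q.castSucc : Fin (K + 2)).castSucc)) = r := by omega
      have h11 := hmmin _ h10
      rw [Fin.le_def] at h11
      simp only [Fin.coe_castSucc] at h11
      omega
  have hqv : (q : ℕ) = (m : ℕ) := by
    have := congrArg Fin.val hqc
    simpa [hidef] using this
  have hqp : q = p := Fin.ext (by omega)
  have hfinal : c (i.succ) = c m := by
    have hqr' : c (i.succ)
        = X.map (SimplexCategory.σ q).op (X.map (SimplexCategory.δ q.castSucc).op (c (i.succ))) :=
      hqr
    rw [hqc, hqp, hs, ← hpr'] at hqr'
    exact hqr'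
  have hisucc : (i : Fin (K + 2)).succ = (⟨(m : ℕ) + 1, by omega⟩ : Fin (K + 3)) :=
    Fin.ext (by simp [hidef])
  refine ⟨⟨hplt, ?_⟩, ?_⟩
  · rw [hpm]; exact hpr
  · rw [← hisucc, hfinal]


end AufhebungSSet
end

section
/- Let X be a simplicial set and let x and y be degenerate n-simplices of X (n ≥ 1). If x and y have the same faces, i.e., xδ_i = yδ_i for all 0 ≤ i ≤ n, then x = y. -/
open CategoryTheory Simplicial

namespace AufhebungSSet

open SimplexCategory in
lemma map_map (X : SSet) {a b c : SimplexCategory} (f : a ⟶ b) (g : b ⟶ c)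
    (w : X.obj (Opposite.op c)) :
    X.map f.op (X.map g.op w) = X.map (f ≫ g).op w := by
  rw [op_comp, X.map_comp]; rfl

open SimplexCategory in
lemma pr_of_isDegen (X : SSet) {n : ℕ} (x : X _⦋n + 1⦌) (hx : IsDegen X x) :
    ∃ i : Fin (n + 1), ProperlyReduces X i x := by
  obtain ⟨m, hm, ε, hsurj, y₀, hxy⟩ := hx
  have hninj : ¬ Function.Injective ε.toOrderHom := by
    intro hinj
    have := Fintype.card_le_of_injective _ hinj
    simp only [Fintype.card_fin, len_mk] at this
    omega
  obtain ⟨i, θ', hθ⟩ := eq_σ_comp_of_not_injective ε hninj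
  refine ⟨i, ?_⟩
  have hx' : x = X.map (σ i).op (X.map θ'.op y₀) := by
    rw [hxy, hθ, ← map_map]
  have hd : X.map (δ i.castSucc).op x = X.map θ'.op y₀ := by
    rw [hx', map_map, δ_comp_σ_self, op_id, FunctorToTypes.map_id_apply]
  show x = _
  rw [hd]
  exact hx'

open SimplexCategory in
lemma eq_of_pr (X : SSet) {n : ℕ} (x y : X _⦋n + 1⦌) (i : Fin (n + 1))
    (hi : ProperlyReduces X i x)
    (v : X _⦋n⦌) (hv : y = X.map (SimplexCategory.σ i).op v)
    (hface : X.map (SimplexCategory.δ i.castSucc).op x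
       = X.map (SimplexCategory.δ i.castSucc).op y) :
    x = y := by
  have hdy : X.map (δ i.castSucc).op y = v := by
    rw [hv, map_map, δ_comp_σ_self, op_id, FunctorToTypes.map_id_apply]
  rw [hi, hface, hdy, ← hv]

open SimplexCategory in
lemma aux_eq (X : SSet) (n : ℕ) (x y : X _⦋n + 1⦌) (i j : Fin (n + 1))
    (hi : ProperlyReduces X i x) (hj : ProperlyReduces X j y) (hij : i ≤ j)
    (h : ∀ k : Fin (n + 2),
      X.map (SimplexCategory.δ k).op x = X.map (SimplexCategory.δ k).op y) :
    x = y := by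
  rcases eq_or_lt_of_le hij with rfl | hlt
  · exact eq_of_pr X x y i hi _ hj (h i.castSucc)
  · -- i < j
    rcases n with _ | m
    · have h1 := i.isLt; have h2 := j.isLt
      have h3 : (i : ℕ) < (j : ℕ) := hlt
      omega
    · -- now i j : Fin (m + 2), x y : X _[m + 2]
      set w : X _⦋m + 1⦌ := X.map (δ i.castSucc).op x with hw
      have hxw : x = X.map (σ i).op w := hi
      have hyj : y = X.map (σ j).op (X.map (δ j.castSucc).op x) :=
        hj.trans (congrArg _ (h j.castSucc).symm)
      have hvlt : (i : ℕ) < (j : ℕ) := hlt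
      have hj0 : j ≠ 0 := by
        intro hj0; rw [hj0] at hvlt; simp at hvlt
      by_cases hA : (j : ℕ) = (i : ℕ) + 1
      · -- j = i + 1
        have hcs : j.castSucc = i.succ := by
          apply Fin.ext; simp [hA]
        have hdx : X.map (δ j.castSucc).op x = w := by
          rw [hxw, map_map, δ_comp_σ_succ' hcs, op_id,
            FunctorToTypes.map_id_apply]
        have hyw : y = X.map (σ j).op w := hyj.trans (congrArg _ hdx)
        set lj : Fin (m + 1) := j.pred hj0 with hlj
        have hsucc : lj.succ = j := Fin.succ_pred j hj0
        have hle : i ≤ lj.castSucc := by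
          rw [Fin.le_def]; simp [hlj, hA]
        have key : δ i.castSucc ≫ σ j = σ lj ≫ δ i := by
          have := δ_comp_σ_of_le (i := i) (j := lj) hle
          rwa [hsucc] at this
        have hww : w = X.map (σ lj).op (X.map (δ i).op w) := by
          have hd2 : X.map (δ i.castSucc).op y
              = X.map (σ lj).op (X.map (δ i).op w) := by
            rw [hyw, map_map, key, ← map_map]
          conv_lhs => rw [hw, h i.castSucc]
          exact hd2
        have hss : σ j ≫ σ lj = σ i ≫ σ lj := by
          have hcc : lj.castSucc = i := by
            apply Fin.ext; simp [hlj, hA]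
          have := σ_comp_σ (i := lj) (j := lj) le_rfl
          rw [hcc, hsucc] at this
          exact this.symm
        refine eq_of_pr X x y i hi (X.map (σ lj).op (X.map (δ i).op w))
          ?_ (h i.castSucc)
        conv_lhs => rw [hyw, hww]
        rw [map_map X (σ j) (σ lj) (X.map (δ i).op w), hss,
          ← map_map X (σ i) (σ lj) (X.map (δ i).op w)]
      · -- i + 1 < j
        have hB : (i : ℕ) + 1 < (j : ℕ) := lt_of_le_of_ne hvlt (Ne.symm hA)
        have hcs0 : j.castSucc ≠ 0 := by
          intro hc
          have : (j : ℕ) = 0 := by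
            have := congrArg Fin.val hc; simpa using this
          omega
        have hil : i ≠ Fin.last (m + 1) := by
          intro hc
          have : (i : ℕ) = m + 1 := by rw [hc]; simp
          have := j.isLt
          omega
        set li : Fin (m + 2) := (j.castSucc).pred hcs0 with hli
        set lj : Fin (m + 1) := i.castPred hil with hlj2
        have hsucc : li.succ = j.castSucc := Fin.succ_pred _ hcs0
        have hcc : lj.castSucc = i := Fin.castSucc_castPred i hil
        have hltlj : lj.castSucc < li := by
          rw [Fin.lt_def]; simp [hli, hlj2]; omega
        have key : δ j.castSucc ≫ σ i = σ lj ≫ δ li := by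
          have := δ_comp_σ_of_gt (i := li) (j := lj) hltlj
          rwa [hsucc, hcc] at this
        set u : X _⦋m⦌ := X.map (δ li).op w with hu
        have hdx2 : X.map (δ j.castSucc).op x = X.map (σ lj).op u := by
          rw [hxw, map_map, key, ← map_map, ← hu]
        have hyu : y = X.map (σ j).op (X.map (σ lj).op u) :=
          hyj.trans (congrArg _ hdx2)
        have hpj : (j.pred hj0).succ = j := Fin.succ_pred j hj0
        have hlelj : lj ≤ j.pred hj0 := by
          rw [Fin.le_def]; simp [hlj2]; omega
        have hss : σ j ≫ σ lj = σ i ≫ σ (j.pred hj0) := by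
          have := σ_comp_σ (i := lj) (j := j.pred hj0) hlelj
          rw [hcc, hpj] at this
          exact this.symm
        refine eq_of_pr X x y i hi (X.map (σ (j.pred hj0)).op u)
          ?_ (h i.castSucc)
        rw [hyu, map_map X (σ j) (σ lj) u, hss, ← map_map X (σ i) _ u]

/-- Two degenerate `n`-simplices (`n ≥ 1`) with the same faces are equal. -/
theorem degen_eq_of_faces_eq (X : SSet) (n : ℕ) (x y : X _⦋n + 1⦌)
    (hx : IsDegen X x) (hy : IsDegen X y)
    (h : ∀ i : Fin (n + 2),
      X.map (SimplexCategory.δ i).op x = X.map (SimplexCategory.δ i).op y) :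
    x = y := by
  obtain ⟨i, hix⟩ := pr_of_isDegen X x hx
  obtain ⟨j, hjy⟩ := pr_of_isDegen X y hy
  rcases le_total i j with hij | hji
  · exact aux_eq X n x y i j hix hjy hij h
  · exact (aux_eq X n y x j i hjy hix hji (fun k => (h k).symm)).symm

end AufhebungSSet
end
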